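/- For each Schur stable matrix A ∈ ℝ^{d×d} (all eigenvalues of modulus < 1), there exist a symmetric positive definite P ∈ ℝ^{d×d} and λ ∈ (0,1) such that Aᵀ P A ≤ λ P (in the positive semidefinite order); equivalently, V(Ax) ≤ λ V(x) for all x, where V(x) = xᵀ P x. -/

import Mathlib

open Matrix Filter Topology

attribute [local instance] Matrix.linftyOpNormedRing Matrix.linftyOpNormedAlgebra
  Matrix.linftyOpNormedSpace

private lemma stmt16_aux_scalar (b μ : ℝ) (n : ℕ) (dd : ℝ) :
    ((μ^2)⁻¹) ^ n * (dd * (b ^ n * b ^ n)) = dd * ((b/μ)^2) ^ n := by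
  rw [div_pow, div_eq_mul_inv]
  ring

theorem stmt_16 {d : ℕ} (A : Matrix (Fin d) (Fin d) ℝ)
    (hA : ∀ z ∈ spectrum ℂ (A.map (algebraMap ℝ ℂ)), ‖z‖ < 1) :
    ∃ (P : Matrix (Fin d) (Fin d) ℝ) (lam : ℝ), P.PosDef ∧ 0 < lam ∧ lam < 1 ∧
      (lam • P - Aᵀ * P * A).PosSemidef := by
  classical
  set Ac := A.map (algebraMap ℝ ℂ) with hAc
  -- spectral radius < 1
  have hρ : spectralRadius ℂ Ac < 1 := by
    rcases Set.eq_empty_or_nonempty (spectrum ℂ Ac) with h | h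
    · simp [spectralRadius, h]
    · have h1 : ∀ z ∈ spectrum ℂ Ac, ‖z‖₊ < (1 : NNReal) := by
        intro z hz
        have hz' := hA z hz
        exact_mod_cast hz'
      have := spectrum.spectralRadius_lt_of_forall_lt_of_nonempty h h1
      simpa using this
  obtain ⟨ν, hν1, hν2⟩ := ENNReal.lt_iff_exists_nnreal_btwn.mp hρ
  have hν2' : (ν : ℝ) < 1 := by exact_mod_cast hν2
  have hgel := spectrum.pow_nnnorm_pow_one_div_tendsto_nhds_spectralRadius Ac
  have hev : ∀ᶠ n : ℕ in atTop, (‖Ac ^ n‖₊ : ENNReal) ^ (1/(n:ℝ)) < (ν : ENNReal) :=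
    hgel.eventually_lt_const hν1
  have hnorm_eq : ∀ n : ℕ, ‖A ^ n‖₊ = ‖Ac ^ n‖₊ := by
    intro n
    have h1 : Ac ^ n = (A ^ n).map (algebraMap ℝ ℂ) := by
      rw [hAc]
      simpa [RingHom.mapMatrix_apply] using (map_pow ((algebraMap ℝ ℂ).mapMatrix) A n).symm
    rw [h1, Matrix.linfty_opNNNorm_def, Matrix.linfty_opNNNorm_def]
    congr 1
    funext i
    congr 1
    funext j
    simp [Matrix.map_apply]
  have hbound : ∀ᶠ n : ℕ in atTop, ‖A ^ n‖ ≤ (ν:ℝ) ^ n := by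
    filter_upwards [hev, eventually_ge_atTop 1] with n hn hn1
    have hn0 : (n:ℝ) ≠ 0 := by
      have : (0:ℝ) < n := by exact_mod_cast hn1
      exact ne_of_gt this
    have h2 : (‖Ac ^ n‖₊ : ENNReal) < (ν : ENNReal) ^ (n:ℝ) := by
      have := ENNReal.rpow_lt_rpow hn (by positivity : (0:ℝ) < (n:ℝ))
      rwa [← ENNReal.rpow_mul, one_div, inv_mul_cancel₀ hn0, ENNReal.rpow_one] at this
    have h3 : ‖Ac ^ n‖₊ ≤ ν ^ n := by
      have h2' := h2.le
      rw [ENNReal.rpow_natCast, ← ENNReal.coe_pow, ENNReal.coe_le_coe] at h2'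
      exact h2'
    have h4 : ‖A ^ n‖₊ ≤ ν ^ n := (hnorm_eq n) ▸ h3
    exact_mod_cast h4
  -- choose μ, lam
  set b : ℝ := (ν : ℝ) with hb
  have hb0 : (0:ℝ) ≤ b := ν.coe_nonneg
  have hb1 : b < 1 := hν2'
  set μ : ℝ := (b + 1) / 2 with hμ
  have hμ0 : 0 < μ := by rw [hμ]; linarith
  have hbμ : b < μ := by rw [hμ]; linarith
  have hμ1 : μ < 1 := by rw [hμ]; linarith
  set lam : ℝ := μ ^ 2 with hlam
  have hlam0 : 0 < lam := by positivity
  have hlam1 : lam < 1 := by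
    rw [hlam]
    nlinarith
  -- the series
  set f : ℕ → Matrix (Fin d) (Fin d) ℝ := fun n => (lam⁻¹) ^ n • ((A ^ n)ᵀ * A ^ n) with hf
  -- transpose norm bound
  have hentry : ∀ (M : Matrix (Fin d) (Fin d) ℝ) (j k : Fin d), ‖M j k‖₊ ≤ ‖M‖₊ := by
    intro M j k
    rw [Matrix.linfty_opNNNorm_def]
    exact le_trans (Finset.single_le_sum (f := fun k => ‖M j k‖₊)
      (fun _ _ => zero_le) (Finset.mem_univ k))
      (Finset.le_sup (f := fun i => ∑ j : Fin d, ‖M i j‖₊) (Finset.mem_univ j))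
  have hT : ∀ M : Matrix (Fin d) (Fin d) ℝ, ‖Mᵀ‖₊ ≤ (d : NNReal) * ‖M‖₊ := by
    intro M
    rw [Matrix.linfty_opNNNorm_def]
    refine Finset.sup_le fun i _ => ?_
    calc ∑ j, ‖Mᵀ i j‖₊ ≤ ∑ _j : Fin d, ‖M‖₊ := by
          refine Finset.sum_le_sum fun j _ => ?_
          rw [Matrix.transpose_apply]
          exact hentry M j i
      _ = (d : NNReal) * ‖M‖₊ := by
          simp [Finset.sum_const, Finset.card_univ, nsmul_eq_mul]
  -- summability
  have hrdiv : 0 ≤ b / μ := by positivity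
  have hr1 : (b / μ) ^ 2 < 1 := by
    have h : b / μ < 1 := by rw [div_lt_one hμ0]; exact hbμ
    nlinarith
  have hgsum : Summable (fun n : ℕ => (d:ℝ) * ((b/μ)^2) ^ n) :=
    (summable_geometric_of_lt_one (by positivity) hr1).mul_left _
  have hfs : Summable f := by
    apply Summable.of_norm_bounded_eventually_nat hgsum
    filter_upwards [hbound] with n hn
    have hAn0 : (0:ℝ) ≤ ‖A ^ n‖ := norm_nonneg _
    have hTn : ‖(A ^ n)ᵀ‖ ≤ (d:ℝ) * ‖A ^ n‖ := by
      have := hT (A ^ n)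
      exact_mod_cast this
    have h1 : ‖(A ^ n)ᵀ * A ^ n‖ ≤ (d:ℝ) * (b ^ n * b ^ n) := by
      calc ‖(A ^ n)ᵀ * A ^ n‖ ≤ ‖(A ^ n)ᵀ‖ * ‖A ^ n‖ := norm_mul_le _ _
        _ ≤ ((d:ℝ) * ‖A ^ n‖) * ‖A ^ n‖ :=
            mul_le_mul_of_nonneg_right hTn hAn0
        _ = (d:ℝ) * (‖A ^ n‖ * ‖A ^ n‖) := by ring
        _ ≤ (d:ℝ) * (b ^ n * b ^ n) := by
            have hbn : (0:ℝ) ≤ b ^ n := pow_nonneg hb0 n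
            exact mul_le_mul_of_nonneg_left (mul_le_mul hn hn hAn0 hbn) (Nat.cast_nonneg d)
    have hlaminv : (0:ℝ) ≤ lam⁻¹ ^ n := by positivity
    calc ‖f n‖ = (lam⁻¹) ^ n * ‖(A ^ n)ᵀ * A ^ n‖ := by
          rw [hf]
          simp only
          rw [norm_smul, Real.norm_eq_abs, abs_pow, abs_of_nonneg (by positivity : (0:ℝ) ≤ lam⁻¹)]
      _ ≤ (lam⁻¹) ^ n * ((d:ℝ) * (b ^ n * b ^ n)) := mul_le_mul_of_nonneg_left h1 hlaminv
      _ = (d:ℝ) * ((b/μ)^2) ^ n := stmt16_aux_scalar b μ n d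
  set P := ∑' n, f n with hPdef
  have hP : HasSum f P := hfs.hasSum
  -- each term is PSD
  have hfpsd : ∀ n, (f n).PosSemidef := by
    intro n
    have h1 : ((A ^ n)ᵀ * A ^ n).PosSemidef := by
      have := Matrix.posSemidef_conjTranspose_mul_self (A ^ n)
      simpa [Matrix.conjTranspose_eq_transpose_of_trivial, Matrix.map_id, star_trivial] using this
    refine Matrix.PosSemidef.of_dotProduct_mulVec_nonneg ?_ fun x => ?_
    · rw [hf]
      simp only
      rw [Matrix.IsHermitian, Matrix.conjTranspose_smul, h1.1]
      simp
    · rw [hf]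
      simp only
      rw [Matrix.smul_mulVec, dotProduct_smul]
      exact mul_nonneg (by positivity) (h1.dotProduct_mulVec_nonneg x)
  -- P is Hermitian
  have hPh : P.IsHermitian := by
    rw [Matrix.IsHermitian, hPdef, Matrix.conjTranspose_tsum]
    exact tsum_congr fun n => (hfpsd n).1
  -- quadratic form sums
  have hQ : ∀ x : Fin d → ℝ, HasSum (fun n => x ⬝ᵥ (f n *ᵥ x)) (x ⬝ᵥ (P *ᵥ x)) := by
    intro x
    have hcont : Continuous fun M : Matrix (Fin d) (Fin d) ℝ => x ⬝ᵥ (M *ᵥ x) :=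
      continuous_const.dotProduct (continuous_id.matrix_mulVec continuous_const)
    have := hP.map (AddMonoidHom.mk' (fun M : Matrix (Fin d) (Fin d) ℝ => x ⬝ᵥ (M *ᵥ x))
      (fun M N => by simp [Matrix.add_mulVec, dotProduct_add])) hcont
    simpa [Function.comp_def] using this
  have hf0 : f 0 = 1 := by
    rw [hf]; simp
  -- P is positive definite
  have hPpos : P.PosDef := by
    refine Matrix.PosDef.of_dotProduct_mulVec_pos hPh fun x hx => ?_
    have h0 : ∀ n, 0 ≤ x ⬝ᵥ (f n *ᵥ x) := by
      intro n
      have := (hfpsd n).dotProduct_mulVec_nonneg x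
      simpa [star_trivial] using this
    have hle : x ⬝ᵥ (f 0 *ᵥ x) ≤ x ⬝ᵥ (P *ᵥ x) :=
      le_hasSum (hQ x) 0 (fun j _ => h0 j)
    have hpos : 0 < x ⬝ᵥ (f 0 *ᵥ x) := by
      rw [hf0, Matrix.one_mulVec]
      have := Matrix.dotProduct_self_star_pos_iff (v := x)
      simp only [star_trivial] at this
      exact this.mpr hx
    have := lt_of_lt_of_le hpos hle
    simpa [star_trivial] using this
  -- conjugated sums
  have hconj : HasSum (fun n => Aᵀ * f n * A) (Aᵀ * P * A) := by
    have hcont : Continuous fun M : Matrix (Fin d) (Fin d) ℝ => Aᵀ * M * A :=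
      (continuous_const.matrix_mul continuous_id).matrix_mul continuous_const
    have := hP.map (AddMonoidHom.mk' (fun M : Matrix (Fin d) (Fin d) ℝ => Aᵀ * M * A)
      (fun M N => by simp [Matrix.mul_add, Matrix.add_mul])) hcont
    simpa [Function.comp_def] using this
  have hterm : ∀ n, Aᵀ * f n * A = lam • f (n + 1) := by
    intro n
    rw [hf]
    simp only
    rw [Matrix.mul_smul, Matrix.smul_mul, smul_smul]
    have hsc : lam * lam⁻¹ ^ (n + 1) = lam⁻¹ ^ n := by
      rw [pow_succ]
      field_simp
    rw [hsc]
    congr 1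
    rw [pow_succ, Matrix.transpose_mul]
    simp only [Matrix.mul_assoc]
  have hshift : HasSum (fun n => f (n + 1)) (P - f 0) := by
    refine (hasSum_nat_add_iff 1).mpr ?_
    simpa using hP
  have hkey : Aᵀ * P * A = lam • (P - f 0) := by
    have h1 : HasSum (fun n => lam • f (n + 1)) (lam • (P - f 0)) := hshift.const_smul lam
    have h2 : HasSum (fun n => lam • f (n + 1)) (Aᵀ * P * A) := by
      have := hconj
      simp only [hterm] at this
      exact this
    exact h2.unique h1
  refine ⟨P, lam, hPpos, hlam0, hlam1, ?_⟩
  have hfinal : lam • P - Aᵀ * P * A = lam • (1 : Matrix (Fin d) (Fin d) ℝ) := by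
    rw [hkey, hf0, smul_sub, sub_sub_cancel]
  rw [hfinal]
  refine Matrix.PosSemidef.of_dotProduct_mulVec_nonneg ?_ fun x => ?_
  · rw [Matrix.smul_one_eq_diagonal]
    exact Matrix.isHermitian_diagonal _
  · rw [Matrix.smul_mulVec, Matrix.one_mulVec, dotProduct_smul]
    refine mul_nonneg hlam0.le ?_
    have := dotProduct_self_star_nonneg (star x)
    simpa [star_trivial] using this
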